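/- Any smooth map g: V → V (not assumed to be a diffeomorphism) satisfying Ω(g(z), Dg_z(v)) = Ω(z, v) for all z, v ∈ V is linear and lies in Sp(V, Ω). -/

import Mathlib

open ContinuousLinearMap Set

/-- Any smooth map `g : V → V` (not assumed to be a diffeomorphism) satisfying
`Ω(g(z), Dg_z(v)) = Ω(z, v)` for all `z, v ∈ V` is linear and lies in `Sp(V, Ω)`. -/
theorem stmt_1 {V : Type*} [NormedAddCommGroup V] [NormedSpace ℝ V] [FiniteDimensional ℝ V]
    (Ω : V →ₗ[ℝ] V →ₗ[ℝ] ℝ)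
    (hΩalt : ∀ x : V, Ω x x = 0)
    (hΩnd : ∀ x : V, (∀ y : V, Ω x y = 0) → x = 0)
    (g : V → V) (hg : ContDiff ℝ (⊤ : ℕ∞) g)
    (hpres : ∀ z v : V, Ω (g z) (fderiv ℝ g z v) = Ω z v) :
    IsLinearMap ℝ g ∧ Function.Bijective g ∧ ∀ x y : V, Ω (g x) (g y) = Ω x y := by
  -- antisymmetry
  have hskew : ∀ x y : V, Ω x y = - Ω y x := by
    intro x y
    have h := hΩalt (x + y)
    simp [map_add, hΩalt] at h
    linarith
  -- continuous bilinear version of Ω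
  let Ω₁ : V →ₗ[ℝ] V →L[ℝ] ℝ :=
    { toFun := fun x => (Ω x).toContinuousLinearMap
      map_add' := by intro x y; ext v; simp
      map_smul' := by intro c x; ext v; simp }
  let Ωc : V →L[ℝ] V →L[ℝ] ℝ := Ω₁.toContinuousLinearMap
  have hΩc : ∀ x y : V, Ωc x y = Ω x y := fun x y => rfl
  have hgd : Differentiable ℝ g := hg.differentiable (by simp)
  set G : V → V →L[ℝ] V := fderiv ℝ g with hGdef
  have hGc : ContDiff ℝ (⊤ : ℕ∞) G := hg.fderiv_right (by exact_mod_cast le_top)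
  have hGd : Differentiable ℝ G := hGc.differentiable (by simp)
  -- key identity from differentiating hpres
  have key : ∀ z u v : V,
      Ω (G z u) (G z v) + Ω (g z) (fderiv ℝ G z u v) = Ω u v := by
    intro z u v
    have h1 : HasFDerivAt g (G z) z := (hgd z).hasFDerivAt
    have h2 : HasFDerivAt G (fderiv ℝ G z) z := (hGd z).hasFDerivAt
    have h3 : HasFDerivAt (fun w => G w v)
        ((ContinuousLinearMap.apply ℝ V v).comp (fderiv ℝ G z)) z :=
      (ContinuousLinearMap.apply ℝ V v).hasFDerivAt.comp z h2
    have hB := (Ωc.isBoundedBilinearMap.hasFDerivAt (g z, G z v)).comp z (h1.prodMk h3)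
    have hfun : (fun w => Ωc (g w) (G w v)) = fun w => Ωc w v := by
      funext w
      simp only [hΩc]
      exact hpres w v
    rw [show ((fun p : V × V => Ωc p.1 p.2) ∘ fun w => (g w, G w v))
        = fun w => Ωc (g w) (G w v) from rfl, hfun] at hB
    have hR : HasFDerivAt (fun w : V => Ωc w v) (Ωc.flip v) z := (Ωc.flip v).hasFDerivAt
    have := hB.unique hR
    have happ := DFunLike.congr_fun this u
    simp only [ContinuousLinearMap.coe_comp', Function.comp_apply,
      ContinuousLinearMap.prod_apply, IsBoundedBilinearMap.deriv_apply,
      ContinuousLinearMap.flip_apply, ContinuousLinearMap.apply_apply] at happ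
    simp only [hΩc] at happ
    linarith

  -- symmetry of second derivative
  have hsym : ∀ z u v : V, fderiv ℝ G z u v = fderiv ℝ G z v u := by
    intro z u v
    exact second_derivative_symmetric (fun y => (hgd y).hasFDerivAt) (hGd z).hasFDerivAt u v
  -- each derivative is symplectic
  have hsymp : ∀ z u v : V, Ω (G z u) (G z v) = Ω u v := by
    intro z u v
    have h1 := key z u v
    have h2 := key z v u
    rw [hsym z v u] at h2
    have h3 := hskew (G z v) (G z u)
    have h4 := hskew v u
    linarith
  -- each derivative is bijective
  have hinj : ∀ z : V, Function.Injective (G z) := by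
    intro z x y hxy
    have : x - y = 0 := by
      apply hΩnd
      intro w
      have : Ω (G z (x - y)) (G z w) = Ω (x - y) w := hsymp z (x - y) w
      rw [map_sub, hxy, sub_self] at this
      simpa using this.symm
    exact sub_eq_zero.mp this
  have hsurj : ∀ z : V, Function.Surjective (G z) := by
    intro z
    have := (LinearMap.injective_iff_surjective (f := (G z : V →ₗ[ℝ] V))).mp
    exact this (hinj z)
  -- g z = G z z
  have hgz : ∀ z : V, g z = G z z := by
    intro z
    have h : ∀ w : V, Ω (g z - G z z) w = 0 := by
      intro w
      obtain ⟨v, rfl⟩ := hsurj z w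
      have h1 := hpres z v
      have h2 := hsymp z z v
      simp only [map_sub, LinearMap.sub_apply]
      rw [hGdef] at h1
      linarith
    have := hΩnd _ h
    rwa [sub_eq_zero] at this
  have hg0 : g 0 = 0 := by rw [hgz 0]; simp
  -- homogeneity : g (t • z) = t • g z for t > 0
  have hhom : ∀ z : V, ∀ t : ℝ, 0 < t → g (t • z) = t • g z := by
    intro z t ht
    have hφ : ∀ s : ℝ, HasDerivAt (fun r : ℝ => g (r • z)) (G (s • z) z) s := by
      intro s
      have h1 : HasDerivAt (fun r : ℝ => r • z) ((1:ℝ) • z) s := (hasDerivAt_id s).smul_const z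
      rw [one_smul] at h1
      exact (hgd (s • z)).hasFDerivAt.comp_hasDerivAt s h1
    have hψ : ∀ s : ℝ, s ∈ Ioi (0:ℝ) →
        HasDerivAt (fun r : ℝ => r⁻¹ • g (r • z)) 0 s := by
      intro s hs
      have hs0 : s ≠ 0 := ne_of_gt hs
      have hinv : HasDerivAt (fun r : ℝ => r⁻¹) (-(s^2)⁻¹) s := hasDerivAt_inv hs0
      have := hinv.smul (hφ s)
      have hval : s⁻¹ • G (s • z) z + (-(s ^ 2)⁻¹) • g (s • z) = 0 := by
        rw [hgz (s • z), map_smul, smul_smul, ← add_smul]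
        convert zero_smul ℝ (G (s • z) z)
        field_simp
        ring
      rwa [hval] at this
    -- constancy on Ioi 0
    have hconst : (fun r : ℝ => r⁻¹ • g (r • z)) t = (fun r : ℝ => r⁻¹ • g (r • z)) 1 := by
      have hdiff : DifferentiableOn ℝ (fun r : ℝ => r⁻¹ • g (r • z)) (Ioi (0:ℝ)) :=
        fun s hs => ((hψ s hs).differentiableAt).differentiableWithinAt
      have hzero : ∀ s ∈ Ioi (0:ℝ),
          fderivWithin ℝ (fun r : ℝ => r⁻¹ • g (r • z)) (Ioi (0:ℝ)) s = 0 := by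
        intro s hs
        rw [fderivWithin_of_isOpen isOpen_Ioi hs]
        have h := (hψ s hs).hasFDerivAt
        rw [h.fderiv]
        ext
        simp
      exact Convex.is_const_of_fderivWithin_eq_zero (convex_Ioi (0:ℝ))
        (f := fun r : ℝ => r⁻¹ • g (r • z)) hdiff hzero (mem_Ioi.mpr ht) (mem_Ioi.mpr one_pos)
    simp only [inv_one, one_smul] at hconst
    have := hconst
    field_simp at this
    rw [← this]
    rw [smul_smul]
    field_simp
    rw [one_smul]
  -- g = G 0
  have hA : ∀ z : V, g z = G 0 z := by
    intro z
    have hφ0 : HasDerivAt (fun r : ℝ => g (r • z)) (G ((0:ℝ) • z) z) 0 := by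
      have h1 : HasDerivAt (fun r : ℝ => r • z) ((1:ℝ) • z) 0 := (hasDerivAt_id 0).smul_const z
      rw [one_smul] at h1
      exact (hgd ((0:ℝ) • z)).hasFDerivAt.comp_hasDerivAt 0 h1
    rw [zero_smul] at hφ0
    have heq : EqOn (fun r : ℝ => g (r • z)) (fun r : ℝ => r • g z) (Ici (0:ℝ)) := by
      intro s hs
      rcases eq_or_lt_of_le (mem_Ici.mp hs) with h | h
      · simp [← h, hg0]
      · exact hhom z s h
    have hw1 : HasDerivWithinAt (fun r : ℝ => g (r • z)) (G 0 z) (Ici (0:ℝ)) 0 :=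
      hφ0.hasDerivWithinAt
    have hw2 : HasDerivWithinAt (fun r : ℝ => r • g z) (G 0 z) (Ici (0:ℝ)) 0 :=
      hw1.congr heq.symm (by simp [hg0])
    have hw3 : HasDerivWithinAt (fun r : ℝ => r • g z) ((1:ℝ) • g z) (Ici (0:ℝ)) 0 :=
      ((hasDerivAt_id (0:ℝ)).smul_const (g z)).hasDerivWithinAt
    have hu : UniqueDiffWithinAt ℝ (Ici (0:ℝ)) (0:ℝ) :=
      uniqueDiffOn_Ici 0 0 (self_mem_Ici)
    have := hw2.derivWithin hu
    rw [hw3.derivWithin hu] at this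
    rw [one_smul] at this
    exact this
  refine ⟨?_, ?_, ?_⟩
  · exact ⟨fun x y => by rw [hA x, hA y, hA (x + y), map_add],
      fun c x => by rw [hA x, hA (c • x), map_smul]⟩
  · have : g = fun z => G 0 z := funext hA
    rw [this]
    exact ⟨hinj 0, hsurj 0⟩
  · intro x y
    rw [hA x, hA y]
    exact hsymp 0 x y
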